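/- Any positive bounded solution v of the boundary value problem -d v'' = f(v) on (0,L), v(0)=0, v'(L)=0 satisfies v(y) < 1 for all y ∈ [0,L]. -/

import Mathlib

open Real Set

theorem stmt_1 (d L : ℝ) (hd : 0 < d) (hL : 0 < L)
    (f : ℝ → ℝ) (hf : ContDiff ℝ 1 f)
    (hf0 : f 0 = 0) (hf1 : f 1 = 0)
    (hfpos : ∀ s ∈ Set.Ioo (0:ℝ) 1, 0 < f s ∧ f s < deriv f 0 * s)
    (hfneg : ∀ s, 1 < s → f s < 0)
    (v : ℝ → ℝ) (hv : ContDiff ℝ 2 v)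
    (hvbdd : BddAbove (Set.range v))
    (hvpos : ∀ y ∈ Set.Ioc 0 L, 0 < v y)
    (hode : ∀ y ∈ Set.Ioo 0 L, -d * deriv (deriv v) y = f (v y))
    (hv0 : v 0 = 0) (hvL : deriv v L = 0) :
    ∀ y ∈ Set.Icc 0 L, v y < 1 := by
  have hvc : Continuous v := hv.continuous
  have hvd : Differentiable ℝ v := hv.differentiable (by norm_num)
  have hv' : ContDiff ℝ 1 (deriv v) := by
    have h2 : ContDiff ℝ (1+1) v := by norm_num; exact hv
    exact (contDiff_succ_iff_deriv.mp h2).2.2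
  have hv'd : Differentiable ℝ (deriv v) := hv'.differentiable (by norm_num)
  have hfc : Continuous f := hf.continuous
  set F : ℝ → ℝ := fun s => ∫ t in (0:ℝ)..s, f t with hFdef
  have hFd : ∀ s, HasDerivAt F (f s) s := fun s =>
    intervalIntegral.integral_hasDerivAt_right (hfc.intervalIntegrable _ _)
      (hfc.stronglyMeasurableAtFilter _ _) hfc.continuousAt
  have hFdiff : Differentiable ℝ F := fun s => (hFd s).differentiableAt
  have hFc : Continuous F := hFdiff.continuous
  have hFsub : ∀ a b : ℝ, F b - F a = ∫ t in a..b, f t := by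
    intro a b
    exact intervalIntegral.integral_interval_sub_left (hfc.intervalIntegrable 0 b)
      (hfc.intervalIntegrable 0 a)
  set E : ℝ → ℝ := fun y => d/2 * (deriv v y)^2 + F (v y) with hEdef
  have hEc : Continuous E := by
    exact (continuous_const.mul ((hv'.continuous).pow 2)).add (hFc.comp hvc)
  have hEd : ∀ y ∈ Ioo 0 L, HasDerivAt E 0 y := by
    intro y hy
    have h1 : HasDerivAt (fun z => deriv v z ^ 2) (2 * deriv v y ^ 1 * deriv (deriv v) y) y :=
      ((hv'd y).hasDerivAt).pow 2
    have h2 : HasDerivAt (fun z => F (v z)) (f (v y) * deriv v y) y :=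
      (hFd (v y)).comp y (hvd y).hasDerivAt
    have h3 := (h1.const_mul (d/2)).add h2
    refine h3.congr_deriv ?_
    have h4 := hode y hy
    have h5 : f (v y) = -d * deriv (deriv v) y := h4.symm
    rw [h5]; ring
  have hEconst : ∀ y ∈ Ioc 0 L, E y = E L := by
    intro y hy
    have := constant_of_has_deriv_right_zero (f := E) (a := y) (b := L)
      (hEc.continuousOn)
      (fun x hx => ((hEd x ⟨lt_of_lt_of_le hy.1 hx.1, hx.2⟩).hasDerivWithinAt))
    exact (this L (right_mem_Icc.2 hy.2)).symm
  by_contra hcon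
  push_neg at hcon
  obtain ⟨yb, hyb, hyb1⟩ := hcon
  obtain ⟨y0, hy0mem, hy0max⟩ :=
    isCompact_Icc.exists_isMaxOn (nonempty_Icc.2 hL.le) hvc.continuousOn
  have hM1 : 1 ≤ v y0 := le_trans hyb1 (hy0max hyb)
  have hy0pos : 0 < y0 := by
    rcases eq_or_lt_of_le hy0mem.1 with h | h
    · exfalso; rw [← h, hv0] at hM1; norm_num at hM1
    · exact h
  have hy0L : y0 ∈ Ioc 0 L := ⟨hy0pos, hy0mem.2⟩
  have hv'y0 : deriv v y0 = 0 := by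
    rcases eq_or_lt_of_le hy0mem.2 with h | h
    · rw [h]; exact hvL
    · exact (hy0max.isLocalMax (Icc_mem_nhds hy0pos h)).deriv_eq_zero
  have hEy0 : E y0 = F (v y0) := by simp [hEdef, hv'y0]
  clear_value F E
  rcases eq_or_lt_of_le hM1 with hM | hM
  · -- Case max = 1 : Gronwall argument
    have hvle1 : ∀ z ∈ Icc 0 L, v z ≤ 1 := fun z hz => le_of_le_of_eq (hy0max hz) hM.symm
    obtain ⟨C, hC⟩ : ∃ C, ∀ s ∈ Icc (0:ℝ) 1, ‖deriv f s‖ ≤ C :=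
      isCompact_Icc.exists_bound_of_continuousOn (hf.continuous_deriv le_rfl).continuousOn
    have hC0 : 0 ≤ C := le_trans (norm_nonneg _) (hC 0 ⟨le_rfl, zero_le_one⟩)
    have hfle : ∀ s ∈ Icc (0:ℝ) 1, f s ≤ C * (1 - s) := by
      intro s hs
      have hmv := Convex.norm_image_sub_le_of_norm_deriv_le
        (fun x _ => (hf.differentiable (by norm_num)).differentiableAt)
        hC (convex_Icc 0 1) (right_mem_Icc.2 zero_le_one) hs
      rw [hf1, sub_zero] at hmv
      have habs : |s - 1| = 1 - s := by
        rw [abs_of_nonpos (by linarith [hs.2] : s - 1 ≤ 0)]; ring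
      rw [Real.norm_eq_abs, Real.norm_eq_abs, habs] at hmv
      exact le_trans (le_abs_self _) hmv
    have hFle : ∀ s ∈ Icc (0:ℝ) 1, F 1 - F s ≤ C/2 * (1-s)^2 := by
      intro s hs
      rw [hFsub s 1]
      have h2 : ∫ t in s..1, f t ≤ ∫ t in s..1, C * (1 - t) := by
        apply intervalIntegral.integral_mono_on hs.2 (hfc.intervalIntegrable _ _)
          ((continuous_const.mul (continuous_const.sub continuous_id)).intervalIntegrable _ _)
        intro t ht
        exact hfle t ⟨le_trans hs.1 ht.1, ht.2⟩
      have h3 : ∫ t in s..1, C * (1 - t) = C/2 * (1-s)^2 := by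
        rw [intervalIntegral.integral_const_mul]
        rw [intervalIntegral.integral_sub (intervalIntegrable_const) intervalIntegral.intervalIntegrable_id]
        rw [intervalIntegral.integral_const, integral_id]
        simp only [smul_eq_mul]
        ring
      linarith
    set K' := Real.sqrt (C / d) with hK'def
    have hK'0 : 0 ≤ K' := Real.sqrt_nonneg _
    have hbound : ∀ y ∈ Ioc 0 L, |deriv v y| ≤ K' * (1 - v y) := by
      intro y hy
      have hEy : E y = F 1 := by
        rw [hEconst y hy, ← hEconst y0 hy0L, hEy0, hM]
      have hvy : v y ∈ Icc (0:ℝ) 1 :=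
        ⟨(hvpos y hy).le, hvle1 y ⟨hy.1.le, hy.2⟩⟩
      have key : d/2 * (deriv v y)^2 ≤ C/2 * (1 - v y)^2 := by
        have h6 := hFle (v y) hvy
        have h7 : d/2 * (deriv v y)^2 = F 1 - F (v y) := by
          rw [← hEy, hEdef]; ring
        linarith
      have h4 : (deriv v y)^2 ≤ (C/d) * (1 - v y)^2 := by
        rw [div_mul_eq_mul_div, le_div_iff₀ hd]
        nlinarith
      have h8 : |deriv v y| = Real.sqrt ((deriv v y)^2) := (Real.sqrt_sq_eq_abs _).symm
      rw [h8]
      calc Real.sqrt ((deriv v y)^2) ≤ Real.sqrt ((C/d) * (1 - v y)^2) := Real.sqrt_le_sqrt h4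
        _ = K' * (1 - v y) := by
            rw [Real.sqrt_mul (div_nonneg hC0 hd.le), Real.sqrt_sq (by linarith [hvy.2])]
    have hall : ∀ y ∈ Ioc 0 y0, v y = 1 := by
      intro y hy
      set g : ℝ → ℝ := fun t => 1 - v (y0 - t) with hgdef
      have hgd : ∀ t : ℝ, HasDerivAt g (deriv v (y0 - t)) t := by
        intro t
        have h5 : HasDerivAt (fun t : ℝ => y0 - t) (-1) t :=
          (hasDerivAt_id t).const_sub y0
        have h6 := ((hvd (y0 - t)).hasDerivAt).comp t h5
        have h7 := h6.const_sub 1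
        simpa using h7
      have hgc : Continuous g := continuous_const.sub (hvc.comp (continuous_const.sub continuous_id))
      have hbd : ∀ x ∈ Ico (0:ℝ) (y0 - y), ‖deriv v (y0 - x)‖ ≤ K' * ‖g x‖ + 0 := by
        intro x hx
        have hmem : y0 - x ∈ Ioc 0 L := ⟨by linarith [hy.1, hx.2], by linarith [hy0mem.2, hx.1]⟩
        have h9 := hbound (y0 - x) hmem
        have h10 : (0:ℝ) ≤ 1 - v (y0 - x) := by
          linarith [hvle1 (y0 - x) ⟨hmem.1.le, hmem.2⟩]
        rw [Real.norm_eq_abs, Real.norm_eq_abs, hgdef]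
        simp only [abs_of_nonneg h10]
        linarith
      have key := norm_le_gronwallBound_of_norm_deriv_right_le (f := g)
        (f' := fun t => deriv v (y0 - t)) (δ := 0) (K := K') (ε := 0) (a := 0) (b := y0 - y)
        hgc.continuousOn (fun x _ => (hgd x).hasDerivWithinAt)
        (by simp [hgdef, hM]) hbd
      have h11 := key (y0 - y) ⟨by linarith [hy.2], le_rfl⟩
      rw [gronwallBound_ε0_δ0] at h11
      have h12 : |1 - v y| ≤ 0 := by
        simpa [hgdef] using h11
      have h13 := abs_nonneg (1 - v y)
      have : |1 - v y| = 0 := le_antisymm h12 h13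
      rw [abs_eq_zero] at this
      linarith
    have h7 : Filter.Tendsto v (nhdsWithin 0 (Ioi 0)) (nhds 1) := by
      have hev : v =ᶠ[nhdsWithin 0 (Ioi 0)] fun _ => (1:ℝ) := by
        filter_upwards [Ioc_mem_nhdsGT_of_mem (Set.mem_Ico.2 ⟨le_rfl, hy0pos⟩)] with z hz
        exact hall z hz
      exact Filter.Tendsto.congr' hev.symm tendsto_const_nhds
    have h8 : Filter.Tendsto v (nhdsWithin 0 (Ioi 0)) (nhds (v 0)) :=
      (hvc.continuousAt).continuousWithinAt
    have h9 := tendsto_nhds_unique h8 h7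
    rw [hv0] at h9
    norm_num at h9
  · -- Case max > 1 : energy + IVT contradiction
    have ivt : (1:ℝ) ∈ v '' Icc 0 y0 := by
      apply intermediate_value_Icc hy0pos.le hvc.continuousOn
      rw [hv0]
      exact ⟨zero_le_one, hM.le⟩
    obtain ⟨y1, hy1mem, hy1⟩ := ivt
    have hy1pos : 0 < y1 := by
      rcases eq_or_lt_of_le hy1mem.1 with h | h
      · exfalso; rw [← h, hv0] at hy1; norm_num at hy1
      · exact h
    have hy1lt : y1 < y0 := lt_of_le_of_ne hy1mem.2 (by rintro rfl; rw [hy1] at hM; linarith)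
    have hy1L : y1 ∈ Ioc 0 L := ⟨hy1pos, le_trans hy1lt.le hy0mem.2⟩
    have hFM : F (v y0) < F 1 := by
      have hpos : (0:ℝ) < ∫ t in (1:ℝ)..(v y0), -f t := by
        apply intervalIntegral.intervalIntegral_pos_of_pos_on
          ((hfc.neg).intervalIntegrable _ _) _ hM
        intro x hx
        exact neg_pos.2 (hfneg x hx.1)
      have hneg : (∫ t in (1:ℝ)..(v y0), -f t) = -(∫ t in (1:ℝ)..(v y0), f t) :=
        intervalIntegral.integral_neg
      have h14 := hFsub 1 (v y0)
      rw [hneg] at hpos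
      linarith
    have hE1 : E y1 = E y0 := by rw [hEconst y1 hy1L, hEconst y0 hy0L]
    have hE1' : E y1 = d/2 * (deriv v y1)^2 + F 1 := by rw [hEdef]; simp [hy1]
    have hnn : 0 ≤ d/2 * (deriv v y1)^2 :=
      mul_nonneg (by linarith : (0:ℝ) ≤ d/2) (sq_nonneg _)
    linarith [hE1, hEy0, hE1', hFM, hnn]
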